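/- arXiv:0903.1125 — 3 statements merged into one kernel-verified Lean document; each statement's English description precedes it below -/
import Mathlib

section
/- Let c and l be positive integers, let p : Fin c → ℝ be a probability vector, and let X₁, …, X_l be independent random variables each taking values in {1, …, c} with P(X_j = i) = pᵢ. Then the expected number of distinct values among X₁, …, X_l is at most c · (1 − (1 − 1/c)^l). -/
open MeasureTheory

/-- Contraction-rate lemma in finite form: the expected number of
distinct values among `l` i.i.d.-style independent draws from `c` classes is at
most `c·(1 − (1 − 1/c)^l)`. -/
theorem expected_distinct_values_le
    {Ω : Type*} [MeasurableSpace Ω] (μ : Measure Ω) [IsProbabilityMeasure μ]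
    (c l : ℕ) (hc : 0 < c) (hl : 0 < l)
    (p : Fin c → ℝ) (hp0 : ∀ i, 0 ≤ p i) (hp1 : ∑ i, p i = 1)
    (X : Fin l → Ω → Fin c)
    (hmeas : ∀ j, Measurable (X j))
    (hindep : ProbabilityTheory.iIndepFun X μ)
    (hdist : ∀ j i, μ {ω | X j ω = i} = ENNReal.ofReal (p i)) :
    ∫ ω, ((Finset.univ.image (fun j => X j ω)).card : ℝ) ∂μ
      ≤ c * (1 - (1 - 1 / (c : ℝ)) ^ l) := by
  classical
  have hp1' : ∀ i, p i ≤ 1 := by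
    intro i
    rw [← hp1]
    exact Finset.single_le_sum (fun j _ => hp0 j) (Finset.mem_univ i)
  set A : Fin c → Set Ω := fun i => {ω | ∃ j, X j ω = i} with hA
  have hAmeas : ∀ i, MeasurableSet (A i) := by
    intro i
    have h : A i = ⋃ j, X j ⁻¹' {i} := by ext ω; simp [hA]
    rw [h]
    exact MeasurableSet.iUnion fun j => (hmeas j) (measurableSet_singleton i)
  -- pointwise identity
  have hcard : ∀ ω, ((Finset.univ.image (fun j => X j ω)).card : ℝ)
      = ∑ i : Fin c, (A i).indicator (fun _ => (1:ℝ)) ω := by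
    intro ω
    have h1 : (Finset.univ.image (fun j => X j ω))
        = Finset.univ.filter (fun i => ∃ j, X j ω = i) := by
      ext i; simp
    rw [h1]
    rw [Finset.sum_indicator_eq_sum_filter]
    simp [hA]
  -- measure of each A i
  have hcompl : ∀ i, μ (A i)ᶜ = ENNReal.ofReal ((1 - p i) ^ l) := by
    intro i
    have h : (A i)ᶜ = ⋂ j, X j ⁻¹' {i}ᶜ := by ext ω; simp [hA]
    rw [h]
    rw [hindep.meas_iInter (fun j => ⟨{i}ᶜ, (measurableSet_singleton i).compl, rfl⟩)]
    have hone : ∀ j : Fin l, μ (X j ⁻¹' {i}ᶜ) = ENNReal.ofReal (1 - p i) := by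
      intro j
      have hms : MeasurableSet {ω | X j ω = i} := (hmeas j) (measurableSet_singleton i)
      have heq : X j ⁻¹' {i}ᶜ = {ω | X j ω = i}ᶜ := by ext ω; simp
      rw [heq, prob_compl_eq_one_sub hms, hdist j i, ← ENNReal.ofReal_one,
        ← ENNReal.ofReal_sub _ (hp0 i)]
    simp only [hone]
    rw [Finset.prod_const, ← ENNReal.ofReal_pow (by linarith [hp1' i])]
    simp
  have hAmeasure : ∀ i, (μ (A i)).toReal = 1 - (1 - p i) ^ l := by
    intro i
    have h0 : (0:ℝ) ≤ 1 - p i := by linarith [hp1' i]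
    have h1 : (1:ℝ) - p i ≤ 1 := by linarith [hp0 i]
    have h : μ (A i) = 1 - ENNReal.ofReal ((1 - p i) ^ l) := by
      have h2 := prob_compl_eq_one_sub (μ := μ) (hAmeas i).compl
      rw [compl_compl, hcompl i] at h2
      exact h2
    rw [h]
    have hle : ENNReal.ofReal ((1 - p i) ^ l) ≤ 1 := by
      rw [← ENNReal.ofReal_one]
      exact ENNReal.ofReal_le_ofReal (pow_le_one₀ h0 h1)
    rw [ENNReal.toReal_sub_of_le hle ENNReal.one_ne_top, ENNReal.toReal_one,
      ENNReal.toReal_ofReal (pow_nonneg h0 l)]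
  -- compute the integral
  have hint : ∫ ω, ((Finset.univ.image (fun j => X j ω)).card : ℝ) ∂μ
      = ∑ i : Fin c, (1 - (1 - p i) ^ l) := by
    rw [integral_congr_ae (Filter.Eventually.of_forall hcard)]
    rw [integral_finset_sum _ (fun i _ => (integrable_const (1:ℝ)).indicator (hAmeas i))]
    refine Finset.sum_congr rfl fun i _ => ?_
    rw [integral_indicator_const _ (hAmeas i), smul_eq_mul, mul_one, measureReal_def, hAmeasure i]
  rw [hint]
  -- Jensen step
  have hconv : ConvexOn ℝ (Set.Iic (1:ℝ)) (fun x => (1 - x) ^ l) := by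
    have g : ℝ →ᵃ[ℝ] ℝ := AffineMap.const ℝ ℝ (1:ℝ) - (AffineMap.id ℝ ℝ)
    have := (convexOn_pow (𝕜 := ℝ) l).comp_affineMap
      (AffineMap.const ℝ ℝ (1:ℝ) - (AffineMap.id ℝ ℝ))
    convert this using 1
    all_goals try rfl
    · ext x
      simp [Set.mem_Iic, sub_nonneg]
  have hcne : (c : ℝ) ≠ 0 := Nat.cast_ne_zero.mpr hc.ne'
  have hjensen : (1 - 1 / (c:ℝ)) ^ l ≤ ∑ i : Fin c, (1 / (c:ℝ)) • (1 - p i) ^ l := by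
    have := hconv.map_sum_le (t := Finset.univ) (w := fun _ : Fin c => 1 / (c:ℝ))
      (p := p) (fun i _ => by positivity)
      (by rw [Finset.sum_const, Finset.card_univ, Fintype.card_fin, nsmul_eq_mul]; field_simp)
      (fun i _ => Set.mem_Iic.mpr (hp1' i))
    have hsum : ∑ i : Fin c, (1 / (c:ℝ)) • p i = 1 / c := by
      rw [← Finset.smul_sum, hp1, smul_eq_mul, mul_one]
    rwa [hsum] at this
  have : (c:ℝ) * (1 - 1 / (c:ℝ)) ^ l ≤ ∑ i : Fin c, (1 - p i) ^ l := by
    have h2 : (c:ℝ) * ((1 - 1 / (c:ℝ)) ^ l) ≤ (c:ℝ) * ∑ i : Fin c, (1 / (c:ℝ)) • (1 - p i) ^ l :=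
      mul_le_mul_of_nonneg_left hjensen (by positivity)
    calc (c:ℝ) * (1 - 1 / (c:ℝ)) ^ l ≤ (c:ℝ) * ∑ i : Fin c, (1 / (c:ℝ)) • (1 - p i) ^ l := h2
      _ = ∑ i : Fin c, (1 - p i) ^ l := by
          rw [← Finset.smul_sum, smul_eq_mul]; field_simp
  have hfin : ∑ i : Fin c, (1 - (1 - p i) ^ l)
      = (c:ℝ) - ∑ i : Fin c, (1 - p i) ^ l := by
    rw [Finset.sum_sub_distrib]
    simp [Finset.card_univ]
  rw [hfin]
  nlinarith [this]
end

section
/- Let α > 0, β ∈ (0,1) be real numbers, let r be a positive integer with r·α·β = 1, and set q = Q(α(1−β)) = (1 − e^{−α(1−β)})/(α(1−β)). Then (1/(1−β)) · ∑_{i=0}^{r−1} (1 − i/r) · ∏_{k=0}^{i−1} Q(α(1−β)/(1 − kαβ)) ≤ (1 − q − (q/r)(1 − q^r)) / ((1−β)(1−q)²), where Q(x) = (1 − e^{−x})/x for x > 0. -/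
open Real Finset

lemma Qfun_anti : AntitoneOn (fun x : ℝ => (1 - Real.exp (-x)) / x) (Set.Ioi 0) := by
  have hder : ∀ x ∈ interior (Set.Ioi (0:ℝ)),
      HasDerivAt (fun x : ℝ => (1 - Real.exp (-x)) / x)
        ((Real.exp (-x) * x - (1 - Real.exp (-x)) * 1) / x ^ 2) x := by
    intro x hx
    rw [interior_Ioi] at hx
    have h1 : HasDerivAt (fun x : ℝ => 1 - Real.exp (-x)) (Real.exp (-x)) x := by
      have := ((hasDerivAt_id x).neg.exp).const_sub 1
      simpa using this
    exact h1.div (hasDerivAt_id x) (ne_of_gt hx)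
  apply antitoneOn_of_deriv_nonpos (convex_Ioi 0)
  · exact ContinuousOn.div (by fun_prop) continuousOn_id (fun x hx => ne_of_gt hx)
  · intro x hx
    exact (hder x hx).differentiableAt.differentiableWithinAt
  · intro x hx
    rw [(hder x hx).deriv]
    rw [interior_Ioi] at hx
    apply div_nonpos_of_nonpos_of_nonneg _ (sq_nonneg x)
    have h2 : x + 1 ≤ Real.exp x := Real.add_one_le_exp x
    have h3 : (x + 1) * Real.exp (-x) ≤ Real.exp x * Real.exp (-x) :=
      mul_le_mul_of_nonneg_right h2 (Real.exp_pos _).le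
    rw [← Real.exp_add] at h3
    simp at h3
    nlinarith [Real.exp_pos (-x)]

lemma sum_key (q : ℝ) (n : ℕ) :
    (1 - q)^2 * (∑ i ∈ range n, ((n:ℝ) - i) * q^i) = n*(1-q) - q*(1 - q^n) := by
  induction n with
  | zero => simp
  | succ n ih =>
    have hg : (∑ i ∈ range (n+1), q^i) * (q - 1) = q^(n+1) - 1 := geom_sum_mul q (n+1)
    have hsplit : ∑ i ∈ range (n+1), (((n:ℕ)+1:ℝ) - i) * q^i
        = (∑ i ∈ range (n+1), q^i) + ∑ i ∈ range n, ((n:ℝ) - i) * q^i := by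
      have h : ∀ i ∈ range (n+1), (((n:ℕ)+1:ℝ) - i) * q^i = q^i + ((n:ℝ) - i)*q^i := by
        intro i _; ring
      rw [Finset.sum_congr rfl h, Finset.sum_add_distrib,
          Finset.sum_range_succ (fun i => ((n:ℝ) - i)*q^i) n]
      simp
    push_cast
    rw [hsplit]
    push_cast at ih
    linear_combination ih + (q - 1) * hg

/-- Label-count bound for the representatives algorithm:
with `rαβ = 1` and `q = Q(α(1−β))`,
`(1/(1−β)) ∑_{i=0}^{r−1} (1 − i/r) ∏_{k=0}^{i−1} Q(α(1−β)/(1 − kαβ))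
  ≤ (1 − q − (q/r)(1 − q^r)) / ((1−β)(1−q)²)`. -/
theorem representatives_label_bound
    (Q : ℝ → ℝ) (hQ : ∀ x : ℝ, 0 < x → Q x = (1 - Real.exp (-x)) / x)
    (α β : ℝ) (hα : 0 < α) (hβ : β ∈ Set.Ioo (0 : ℝ) 1)
    (r : ℕ) (hr : 0 < r) (hrab : (r : ℝ) * α * β = 1)
    (q : ℝ) (hq : q = Q (α * (1 - β))) :
    (1 / (1 - β)) *
        ∑ i ∈ Finset.range r, (1 - (i : ℝ) / r) *
          ∏ k ∈ Finset.range i, Q (α * (1 - β) / (1 - (k : ℝ) * α * β))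
      ≤ (1 - q - (q / r) * (1 - q ^ r)) / ((1 - β) * (1 - q) ^ 2) := by
  obtain ⟨hβ0, hβ1⟩ := hβ
  have hx0 : (0:ℝ) < α * (1 - β) := by nlinarith
  have hrR : (0:ℝ) < (r:ℝ) := Nat.cast_pos.mpr hr
  have hab : α * β = 1 / r := by field_simp; linarith [hrab]
  have hqval : q = (1 - Real.exp (-(α * (1 - β)))) / (α * (1 - β)) := by
    rw [hq, hQ _ hx0]
  have hq0 : 0 < q := by
    rw [hqval]
    apply div_pos _ hx0
    have : Real.exp (-(α * (1 - β))) < 1 := Real.exp_lt_one_iff.mpr (by linarith)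
    linarith
  have hq1 : q < 1 := by
    rw [hqval, div_lt_one hx0]
    have := Real.add_one_lt_exp (x := -(α * (1 - β))) (neg_ne_zero.mpr hx0.ne')
    linarith
  -- bound each factor by q
  have hfac : ∀ k : ℕ, k < r → Q (α * (1 - β) / (1 - (k : ℝ) * α * α * β / α)) = 0 → True := by
    intro _ _ _; trivial
  have hden : ∀ k : ℕ, k < r → 0 < 1 - (k : ℝ) * α * β := by
    intro k hk
    have : (k:ℝ) * α * β = (k:ℝ) / r := by rw [mul_assoc, hab]; ring
    rw [this]
    have : (k:ℝ) / r < 1 := (div_lt_one hrR).mpr (Nat.cast_lt.mpr hk)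
    linarith
  have harg : ∀ k : ℕ, k < r → α * (1 - β) ≤ α * (1 - β) / (1 - (k : ℝ) * α * β) := by
    intro k hk
    have h1 := hden k hk
    have h2 : 1 - (k : ℝ) * α * β ≤ 1 := by
      have : 0 ≤ (k:ℝ) * α * β := by positivity
      linarith
    calc α * (1 - β) = α * (1 - β) / 1 := by ring
      _ ≤ α * (1 - β) / (1 - (k : ℝ) * α * β) :=
        div_le_div_of_nonneg_left hx0.le h1 h2
  have hQle : ∀ k : ℕ, k < r → Q (α * (1 - β) / (1 - (k : ℝ) * α * β)) ≤ q := by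
    intro k hk
    have hpos : 0 < α * (1 - β) / (1 - (k : ℝ) * α * β) := div_pos hx0 (hden k hk)
    rw [hQ _ hpos, hqval]
    exact Qfun_anti (Set.mem_Ioi.mpr hx0) (Set.mem_Ioi.mpr hpos) (harg k hk)
  have hQnn : ∀ k : ℕ, k < r → 0 ≤ Q (α * (1 - β) / (1 - (k : ℝ) * α * β)) := by
    intro k hk
    have hpos : 0 < α * (1 - β) / (1 - (k : ℝ) * α * β) := div_pos hx0 (hden k hk)
    rw [hQ _ hpos]
    apply div_nonneg _ hpos.le
    have : Real.exp (-(α * (1 - β) / (1 - (k : ℝ) * α * β))) ≤ 1 :=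
      Real.exp_le_one_iff.mpr (by linarith)
    linarith
  -- bound sum
  have hsum : ∑ i ∈ Finset.range r, (1 - (i : ℝ) / r) *
          ∏ k ∈ Finset.range i, Q (α * (1 - β) / (1 - (k : ℝ) * α * β))
      ≤ ∑ i ∈ Finset.range r, (1 - (i : ℝ) / r) * q ^ i := by
    apply Finset.sum_le_sum
    intro i hi
    rw [Finset.mem_range] at hi
    have hcoef : 0 ≤ 1 - (i : ℝ) / r := by
      have : (i:ℝ) / r ≤ 1 := (div_le_one hrR).mpr (Nat.cast_le.mpr hi.le)
      linarith
    apply mul_le_mul_of_nonneg_left _ hcoef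
    calc ∏ k ∈ Finset.range i, Q (α * (1 - β) / (1 - (k : ℝ) * α * β))
        ≤ ∏ k ∈ Finset.range i, q := by
          apply Finset.prod_le_prod
          · intro k hk; exact hQnn k (lt_trans (Finset.mem_range.mp hk) hi)
          · intro k hk; exact hQle k (lt_trans (Finset.mem_range.mp hk) hi)
      _ = q ^ i := by rw [Finset.prod_const, Finset.card_range]
  -- evaluate
  have hrS : (r:ℝ) * ∑ i ∈ Finset.range r, (1 - (i : ℝ) / r) * q ^ i
      = ∑ i ∈ Finset.range r, ((r:ℝ) - i) * q ^ i := by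
    rw [Finset.mul_sum]
    apply Finset.sum_congr rfl
    intro i _
    field_simp
  have hβ' : (0:ℝ) < 1 - β := by linarith
  have h1q : (0:ℝ) < 1 - q := by linarith
  set S := ∑ i ∈ Finset.range r, (1 - (i : ℝ) / r) * q ^ i with hSdef
  have hkey2 : (1-q)^2 * ((r:ℝ) * S) = (r:ℝ)*(1-q) - q*(1-q^r) := by
    rw [hSdef, hrS]; exact sum_key q r
  have heq : (1 / (1 - β)) * S
      = (1 - q - (q / r) * (1 - q ^ r)) / ((1 - β) * (1 - q) ^ 2) := by
    rw [eq_div_iff (by positivity)]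
    field_simp
    linear_combination hkey2
  calc (1 / (1 - β)) *
        ∑ i ∈ Finset.range r, (1 - (i : ℝ) / r) *
          ∏ k ∈ Finset.range i, Q (α * (1 - β) / (1 - (k : ℝ) * α * β))
      ≤ (1 / (1 - β)) * ∑ i ∈ Finset.range r, (1 - (i : ℝ) / r) * q ^ i :=
        mul_le_mul_of_nonneg_left hsum (by positivity)
    _ = (1 - q - (q / r) * (1 - q ^ r)) / ((1 - β) * (1 - q) ^ 2) := heq
end

section
/- The function α ↦ 1 − (1 − e^{−α}) / (α − e^{−α} + 1) tends to 1/2 as α → 0⁺. -/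
open Filter Real Set

lemma c4_aux : Tendsto (fun α : ℝ => (1 - Real.exp (-α)) / α)
    (nhdsWithin 0 (Set.Ioi 0)) (nhds 1) := by
  have h : HasDerivAt (fun x : ℝ => Real.exp (-x)) (-1) 0 := by
    simpa [Function.comp_def] using (Real.hasDerivAt_exp (-0 : ℝ)).comp 0 (hasDerivAt_neg 0)
  have hs := hasDerivAt_iff_tendsto_slope.mp h
  have hneg : Tendsto (fun x : ℝ => -((Real.exp (-x) - Real.exp (-0)) / (x - 0)))
      (nhdsWithin 0 {(0:ℝ)}ᶜ) (nhds 1) := by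
    simpa [slope_fun_def, div_eq_inv_mul] using hs.neg
  have : Tendsto (fun α : ℝ => (1 - Real.exp (-α)) / α)
      (nhdsWithin 0 {(0:ℝ)}ᶜ) (nhds 1) := by
    refine hneg.congr fun x => ?_
    rw [show Real.exp (-(0:ℝ)) = 1 by simp, sub_zero, ← neg_div, neg_sub]
  exact this.mono_left (nhdsWithin_mono _ fun x hx => ne_of_gt hx)

/-- `1 − (1 − e^{−α})/(α − e^{−α} + 1) → 1/2` as `α → 0⁺`. -/
theorem c4_efficiency_asymptotic :
    Filter.Tendsto
      (fun α : ℝ => 1 - (1 - Real.exp (-α)) / (α - Real.exp (-α) + 1))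
      (nhdsWithin 0 (Set.Ioi 0)) (nhds (1 / 2)) := by
  have hg := c4_aux
  have h2 : Tendsto (fun α : ℝ =>
      1 - ((1 - Real.exp (-α)) / α) / ((1 - Real.exp (-α)) / α + 1))
      (nhdsWithin 0 (Set.Ioi 0)) (nhds (1 - 1 / (1 + 1))) :=
    tendsto_const_nhds.sub (hg.div (hg.add tendsto_const_nhds) (by norm_num))
  have h2' : (1 : ℝ) - 1 / (1 + 1) = 1 / 2 := by norm_num
  rw [h2'] at h2
  refine h2.congr' ?_
  filter_upwards [self_mem_nhdsWithin] with α (hα : 0 < α)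
  have he : Real.exp (-α) < 1 := Real.exp_lt_one_iff.mpr (by linarith)
  have hd : α - Real.exp (-α) + 1 ≠ 0 := by nlinarith
  have key : ((1 - Real.exp (-α)) / α) / ((1 - Real.exp (-α)) / α + 1)
      = (1 - Real.exp (-α)) / (α - Real.exp (-α) + 1) := by
    rw [div_add' _ _ _ hα.ne', div_div_div_cancel_right₀]
    ring_nf
    exact hα.ne'
  rw [key]
end
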